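/- For all real numbers x, y with x ≥ y > 0, one has (e^{xy} - 1)^2 ≤ (e^{x^2} - 1)(e^{y^2} - 1). -/

import Mathlib

open Finset Nat in
lemma exp_sub_one_hasSum (t : ℝ) :
    HasSum (fun n : ℕ => t ^ (n + 1) / ((n + 1)! : ℝ)) (Real.exp t - 1) := by
  have h : HasSum (fun n : ℕ => t ^ n / (n ! : ℝ)) (Real.exp t) := by
    have := NormedSpace.expSeries_div_hasSum_exp t
    rwa [← Real.exp_eq_exp_ℝ] at this
  have h2 : HasSum (fun n : ℕ => t ^ n / (n ! : ℝ)) (Real.exp t - 1 + ∑ i ∈ range 1, t ^ i / (i ! : ℝ)) := by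
    simpa using h
  exact (hasSum_nat_add_iff 1).mpr h2

open Finset Nat in
theorem stmt_0 (x y : ℝ) (hxy : x ≥ y) (hy : y > 0) :
    (Real.exp (x * y) - 1) ^ 2 ≤ (Real.exp (x ^ 2) - 1) * (Real.exp (y ^ 2) - 1) := by
  have hx : 0 < x := lt_of_lt_of_le hy hxy
  have hxs := exp_sub_one_hasSum (x ^ 2)
  have hys := exp_sub_one_hasSum (y ^ 2)
  have hxys := exp_sub_one_hasSum (x * y)
  have key : ∀ N : ℕ,
      (∑ n ∈ range N, (x * y) ^ (n + 1) / ((n + 1)! : ℝ)) ^ 2 ≤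
        (Real.exp (x ^ 2) - 1) * (Real.exp (y ^ 2) - 1) := by
    intro N
    have cs := Finset.sum_sq_le_sum_mul_sum_of_sq_eq_mul (range N)
      (r := fun n => (x * y) ^ (n + 1) / ((n + 1)! : ℝ))
      (f := fun n => (x ^ 2) ^ (n + 1) / ((n + 1)! : ℝ))
      (g := fun n => (y ^ 2) ^ (n + 1) / ((n + 1)! : ℝ))
      (fun i _ => by positivity) (fun i _ => by positivity)
      (fun i _ => by
        simp only [div_pow, div_mul_div_comm, ← mul_pow, ← pow_mul, ← sq]
        ring_nf)
    refine cs.trans (mul_le_mul ?_ ?_ ?_ ?_)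
    · exact sum_le_hasSum _ (fun i _ => by positivity) hxs
    · exact sum_le_hasSum _ (fun i _ => by positivity) hys
    · exact Finset.sum_nonneg fun i _ => by positivity
    · have := sum_le_hasSum (range 1) (fun i (_ : i ∉ range 1) =>
        by positivity : ∀ i ∉ range 1, 0 ≤ (x ^ 2) ^ (i + 1) / ((i + 1)! : ℝ)) hxs
      refine le_trans (le_trans (by positivity) this) le_rfl
  have htend : Filter.Tendsto
      (fun N => (∑ n ∈ range N, (x * y) ^ (n + 1) / ((n + 1)! : ℝ)) ^ 2)
      Filter.atTop (nhds ((Real.exp (x * y) - 1) ^ 2)) :=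
    hxys.tendsto_sum_nat.pow 2
  exact le_of_tendsto' htend key
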